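/- The encoding map ω ↦ P_s from n-bit positive integers to self-inverting permutations of {1,...,2n+1} is injective: two distinct n-bit keys yield distinct permutations P_s. -/

import Mathlib

/-- Binary representation of `ω`, most significant bit first. -/
def binRep (ω : ℕ) : List Bool := (Nat.bits ω).reverse

/-- The extended binary `B*`: `n` ones, then the one's complement of `B`, then a zero. -/
def extBin (ω : ℕ) : List Bool :=
  List.replicate (binRep ω).length true ++ (binRep ω).map (!·) ++ [false]

/-- Ascending list of 1-indexed positions of bit `b` in the bit string `l`. -/
def posOf (l : List Bool) (b : Bool) : List ℕ :=
  ((List.range l.length).filter (fun i => l.getD i false == b)).map (· + 1)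

/-- `Z₀`: ascending positions of zeros in `B*`. -/
def Z0 (ω : ℕ) : List ℕ := posOf (extBin ω) false

/-- `Z₁`: ascending positions of ones in `B*`. -/
def Z1 (ω : ℕ) : List ℕ := posOf (extBin ω) true

/-- Bitonic permutation `P_b = Z₀ ++ reverse Z₁`. -/
def Pb (ω : ℕ) : List ℕ := Z0 ω ++ (Z1 ω).reverse

/-- The self-inverting permutation `P_s`: it pairs the elements of `P_b`
equidistant from its extremes, i.e. `P_s (b_{2n+2-i}) = b_i`. -/
def Ps (ω : ℕ) (x : ℕ) : ℕ :=
  (Pb ω).getD ((Pb ω).length - 1 - (Pb ω).idxOf x) 0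

theorem posOf_append (l₁ l₂ : List Bool) (b : Bool) :
    posOf (l₁ ++ l₂) b = posOf l₁ b ++ (posOf l₂ b).map (· + l₁.length) := by
  simp only [posOf, List.length_append, List.range_add, List.filter_append,
    List.filter_map, List.map_append, List.map_map]
  congr 1
  · congr 1
    apply List.filter_congr
    intro i hi
    rw [List.getD_append _ _ _ _ (List.mem_range.1 hi)]
  · rw [show ((fun i => (l₁ ++ l₂).getD i false == b) ∘ fun x => l₁.length + x)
        = fun i => l₂.getD i false == b from ?_]
    · congr 1
      funext i
      simp only [Function.comp]
      omega
    · funext i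
      simp only [Function.comp]
      rw [List.getD_append_right _ _ _ _ (by omega)]
      simp

theorem mem_posOf {l : List Bool} {b : Bool} {x : ℕ} (h : x ∈ posOf l b) :
    1 ≤ x ∧ x ≤ l.length := by
  simp only [posOf, List.mem_map, List.mem_filter, List.mem_range] at h
  obtain ⟨i, ⟨hi, -⟩, rfl⟩ := h
  omega

theorem mem_posOf_iff {l : List Bool} {b : Bool} {i : ℕ} (h : i < l.length) :
    (i + 1) ∈ posOf l b ↔ l.getD i false = b := by
  simp only [posOf, List.mem_map, List.mem_filter, List.mem_range, beq_iff_eq]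
  constructor
  · rintro ⟨j, ⟨-, hj⟩, hji⟩
    obtain rfl : j = i := by omega
    exact hj
  · exact fun hb => ⟨i, ⟨h, hb⟩, rfl⟩

theorem posOf_replicate_true (n : ℕ) :
    posOf (List.replicate n true) true = (List.range n).map (· + 1) := by
  simp only [posOf, List.length_replicate]
  congr 1
  apply List.filter_eq_self.2
  intro i hi
  rw [List.getD_eq_getElem _ _ (by simpa using List.mem_range.1 hi)]
  simp

theorem posOf_replicate_false (n : ℕ) :
    posOf (List.replicate n true) false = [] := by
  simp only [posOf, List.map_eq_nil_iff]
  apply List.filter_eq_nil_iff.2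
  intro i hi
  rw [List.getD_eq_getElem _ _ (by simpa using List.mem_range.1 hi)]
  simp

theorem posOf_single_false_false : posOf [false] false = [1] := by rfl
theorem posOf_single_false_true : posOf [false] true = [] := by rfl

theorem huv (l : List Bool) :
    (posOf l false).length + (posOf l true).length = l.length := by
  simp only [posOf, List.length_map]
  have h1 := (List.filter_append_perm (fun i => l.getD i false == true) (List.range l.length)).length_eq
  simp only [List.length_append, List.length_range] at h1
  have hff : List.filter (fun i => l.getD i false == false) (List.range l.length)
      = List.filter (fun i => !(l.getD i false == true)) (List.range l.length) := by
    apply List.filter_congr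
    intro i _
    cases l.getD i false <;> rfl
  rw [hff]
  omega

theorem Z0_eq (ω : ℕ) :
    Z0 ω = (posOf ((binRep ω).map (!·)) false).map (· + (binRep ω).length)
      ++ [2 * (binRep ω).length + 1] := by
  set L := binRep ω with hL
  set M := L.map (!·) with hM
  have hlen : M.length = L.length := by simp [hM]
  rw [Z0, extBin, posOf_append, posOf_append, posOf_replicate_false,
    posOf_single_false_false]
  simp [hlen, List.length_replicate]
  simp only [← hL]
  refine ⟨rfl, ?_⟩
  omega

theorem Z1_eq (ω : ℕ) :
    Z1 ω = (List.range (binRep ω).length).map (· + 1)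
      ++ (posOf ((binRep ω).map (!·)) true).map (· + (binRep ω).length) := by
  set L := binRep ω
  set M := L.map (!·) with hM
  have hlen : M.length = L.length := by simp [hM]
  rw [Z1, extBin, posOf_append, posOf_append, posOf_replicate_true,
    posOf_single_false_true]
  simp [hlen]
  rfl

/-- Descending list [n, n-1, ..., 1]. -/
theorem desc_succ (n : ℕ) :
    ((List.range (n+1)).map (· + 1)).reverse
      = (n+1) :: ((List.range n).map (· + 1)).reverse := by
  rw [List.range_succ]
  simp

theorem desc_indexOf (n j : ℕ) (h1 : 1 ≤ j) (h2 : j ≤ n) :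
    (((List.range n).map (· + 1)).reverse).idxOf j = n - j := by
  induction n with
  | zero => omega
  | succ m ih =>
    rw [desc_succ, List.idxOf_cons]
    rcases eq_or_lt_of_le h2 with he | hlt
    · have : (m + 1 == j) = true := by simp [he]
      rw [this]
      simp [he]
    · have : (m + 1 == j) = false := by simp; omega
      rw [this]
      simp only [cond_false]
      rw [ih (by omega)]
      omega

theorem Pb_eq (ω : ℕ) :
    Pb ω = (posOf ((binRep ω).map (!·)) false).map (· + (binRep ω).length)
      ++ [2 * (binRep ω).length + 1]
      ++ ((posOf ((binRep ω).map (!·)) true).map (· + (binRep ω).length)).reverse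
      ++ ((List.range (binRep ω).length).map (· + 1)).reverse := by
  rw [Pb, Z0_eq, Z1_eq, List.reverse_append]
  simp [List.append_assoc]

theorem Pb_length (ω : ℕ) : (Pb ω).length = 2 * (binRep ω).length + 1 := by
  rw [Pb_eq]
  have := huv ((binRep ω).map (!·))
  simp at this ⊢
  omega

theorem key1 (ω : ℕ) (j : ℕ) (h1 : 1 ≤ j) (h2 : j ≤ (binRep ω).length) :
    Ps ω j = (Pb ω).getD (j - 1) 0 := by
  set n := (binRep ω).length with hn
  set u := posOf ((binRep ω).map (!·)) false with hu
  set v := posOf ((binRep ω).map (!·)) true with hv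
  have hken : u.length + v.length = n := by
    have := huv ((binRep ω).map (!·))
    simpa using this
  have hidx : (Pb ω).idxOf j = 2 * n + 1 - j := by
    rw [Pb_eq, List.append_assoc, List.append_assoc]
    rw [List.idxOf_append_of_notMem ?h1]
    case h1 =>
      simp only [List.mem_map]
      rintro ⟨x, hx, rfl⟩
      have := (mem_posOf hx).1
      omega
    rw [List.idxOf_append_of_notMem ?h2]
    case h2 =>
      simp only [List.mem_singleton]
      omega
    rw [List.idxOf_append_of_notMem ?h3]
    case h3 =>
      simp only [List.mem_reverse, List.mem_map]
      rintro ⟨x, hx, rfl⟩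
      have := (mem_posOf hx).1
      omega
    rw [desc_indexOf n j h1 h2]
    simp only [List.length_map, List.length_singleton, List.length_reverse, ← hu, ← hv]
    omega
  rw [Ps, hidx, Pb_length]
  congr 1
  omega

theorem key2 (ω : ℕ) :
    ((Pb ω).take (binRep ω).length).takeWhile (fun x => x != 2 * (binRep ω).length + 1)
      = (posOf ((binRep ω).map (!·)) false).map (· + (binRep ω).length) := by
  set n := (binRep ω).length with hn
  set u := posOf ((binRep ω).map (!·)) false with hu
  set v := posOf ((binRep ω).map (!·)) true with hv
  have hken : u.length + v.length = n := by
    have := huv ((binRep ω).map (!·))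
    simpa using this
  have hAlen : (u.map (· + n)).length = u.length := by simp
  have hA : ∀ a ∈ u.map (· + n), (fun x => x != 2 * n + 1) a = true := by
    simp only [List.mem_map]
    rintro a ⟨x, hx, rfl⟩
    have h2 : x ≤ n := by
      have := (mem_posOf (hu ▸ hx)).2
      simpa [← hn] using this
    simp only [bne_iff_ne, ne_eq]
    omega
  rw [Pb_eq, List.append_assoc, List.append_assoc, ← hn, ← hu, ← hv,
    List.take_append,
    List.take_of_length_le (by rw [hAlen]; omega),
    List.takeWhile_append, if_pos (by rw [List.takeWhile_eq_self_iff.2 hA])]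
  rw [hAlen]
  rcases Nat.eq_zero_or_pos (n - u.length) with hz | hp
  · rw [hz]
    simp
  · obtain ⟨m, hm⟩ : ∃ m, n - u.length = m + 1 := ⟨n - u.length - 1, by omega⟩
    rw [hm]
    rw [show ([2 * n + 1] ++ ((v.map (· + n)).reverse ++ ((List.range n).map (· + 1)).reverse))
      = (2 * n + 1) :: ((v.map (· + n)).reverse ++ ((List.range n).map (· + 1)).reverse) from rfl]
    rw [List.take_succ_cons, List.takeWhile_cons]
    simp

theorem bits_foldr (ω : ℕ) :
    (Nat.bits ω).foldr (fun b m => 2 * m + cond b 1 0) 0 = ω := by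
  induction ω using Nat.strong_induction_on with
  | _ ω ih =>
    rcases Nat.eq_zero_or_pos ω with rfl | hp
    · simp
    rcases Nat.even_or_odd ω with ⟨m, hm⟩ | ⟨m, hm⟩
    · subst hm
      rw [show m + m = 2 * m by ring, Nat.bit0_bits m (by omega)]
      simp only [List.foldr_cons, ih m (by omega)]
      simp
    · subst hm
      rw [Nat.bit1_bits]
      simp only [List.foldr_cons, ih m (by omega)]
      simp

/-- The encoding `ω ↦ P_s` is injective on `n`-bit keys: if the permutations `P_s`
of two `n`-bit keys agree on `{1,…,2n+1}`, the keys coincide. -/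
theorem stmt19 (n ω₁ ω₂ : ℕ) (h₁ : 0 < ω₁) (h₂ : 0 < ω₂)
    (hn₁ : (binRep ω₁).length = n) (hn₂ : (binRep ω₂).length = n)
    (h : ∀ x ∈ Finset.Icc 1 (2*n+1), Ps ω₁ x = Ps ω₂ x) :
    ω₁ = ω₂ := by
  have hPbd : ∀ i, i < n → (Pb ω₁).getD i 0 = (Pb ω₂).getD i 0 := by
    intro i hi
    have hj := h (i + 1) (by simp only [Finset.mem_Icc]; omega)
    rw [key1 ω₁ (i + 1) (by omega) (by omega),
        key1 ω₂ (i + 1) (by omega) (by omega)] at hj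
    simpa using hj
  have htake : (Pb ω₁).take n = (Pb ω₂).take n := by
    apply List.ext_getElem
    · simp [Pb_length, hn₁, hn₂]
    · intro i hl1 hl2
      have hi : i < n := by
        simp only [List.length_take] at hl1
        omega
      rw [List.getElem_take, List.getElem_take,
        ← List.getD_eq_getElem (Pb ω₁) 0, ← List.getD_eq_getElem (Pb ω₂) 0]
      exact hPbd i hi
  have hu12 : posOf ((binRep ω₁).map (!·)) false = posOf ((binRep ω₂).map (!·)) false := by
    have k1 := key2 ω₁
    have k2 := key2 ω₂
    rw [hn₁, htake] at k1
    rw [hn₂] at k2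
    have hmap : (posOf ((binRep ω₁).map (!·)) false).map (· + n)
        = (posOf ((binRep ω₂).map (!·)) false).map (· + n) := k1.symm.trans k2
    exact List.map_injective_iff.2 (add_left_injective n) hmap
  have hM : (binRep ω₁).map (!·) = (binRep ω₂).map (!·) := by
    apply List.ext_getElem (by simp [hn₁, hn₂])
    intro i hl1 hl2
    have hi : i < n := by simpa [hn₁] using hl1
    have c₁ := mem_posOf_iff (l := (binRep ω₁).map (!·)) (b := false) (i := i)
      (by simp only [List.length_map]; omega)
    have c₂ := mem_posOf_iff (l := (binRep ω₂).map (!·)) (b := false) (i := i)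
      (by simp only [List.length_map]; omega)
    rw [hu12] at c₁
    have hgd : ((binRep ω₁).map (!·)).getD i false = ((binRep ω₂).map (!·)).getD i false := by
      have hiff := c₁.symm.trans c₂
      cases hb1 : ((binRep ω₁).map (!·)).getD i false <;>
        cases hb2 : ((binRep ω₂).map (!·)).getD i false <;> simp_all
    rw [List.getD_eq_getElem _ _ hl1, List.getD_eq_getElem _ _ hl2] at hgd
    exact hgd
  have hbin : binRep ω₁ = binRep ω₂ := by
    have hcomp : ((fun x : Bool => !x) ∘ fun x : Bool => !x) = id := by
      funext x; simp
    have := congrArg (List.map (!·)) hM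
    simpa [List.map_map, hcomp] using this
  have hb : Nat.bits ω₁ = Nat.bits ω₂ := by
    have := congrArg List.reverse hbin
    simpa [binRep] using this
  calc ω₁ = (Nat.bits ω₁).foldr (fun b m => 2 * m + cond b 1 0) 0 := (bits_foldr ω₁).symm
    _ = (Nat.bits ω₂).foldr (fun b m => 2 * m + cond b 1 0) 0 := by rw [hb]
    _ = ω₂ := bits_foldr ω₂
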